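/- Let W be a Coxeter group and * the Demazure product. For all v, w ∈ W: v*w = max{vy : y ≤ w and ℓ(vy) = ℓ(v) + ℓ(y)}, and v*w = vy where y is the maximal-length element with y ≤ w and ℓ(vy) = ℓ(v) + ℓ(y). -/

import Mathlib

/-- The strong Bruhat order: `u ≤ v` iff some reduced word for `v` has a subword
which is a word for `u`. -/
def bruhat {B W : Type*} [Group W] {M : CoxeterMatrix B} (cs : CoxeterSystem M W)
    (u v : W) : Prop :=
  ∃ ω : List B, cs.IsReduced ω ∧ cs.wordProd ω = v ∧
    ∃ ω' : List B, ω'.Sublist ω ∧ cs.wordProd ω' = u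

/-- `dem` is the Demazure (Hecke) product on the Coxeter group: it satisfies
`1 * u = u`, `s * u = max{u, su}` for simple reflections `s`, and is associative. -/
def IsDemazureProduct {B W : Type*} [Group W] {M : CoxeterMatrix B}
    (cs : CoxeterSystem M W) (dem : W → W → W) : Prop :=
  (∀ u : W, dem 1 u = u) ∧
  (∀ (i : B) (u : W),
    dem (cs.simple i) u =
      if cs.length u < cs.length (cs.simple i * u) then cs.simple i * u else u) ∧
  (∀ u v x : W, dem (dem u v) x = dem u (dem v x))


namespace DemAux

open List CoxeterSystem

variable {B : Type*} {W : Type*} [Group W] {M : CoxeterMatrix B} (cs : CoxeterSystem M W)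

local prefix:100 "σ" => cs.simple
local prefix:100 "π" => cs.wordProd
local prefix:100 "ℓ" => cs.length

noncomputable local instance : DecidableEq W := Classical.decEq W

lemma simple_mul_base (i j : B) :
    σ j * (σ i * σ j) = (σ i * σ j)⁻¹ * σ j := by
  simp [mul_inv_rev, inv_simple, mul_assoc]

/-- `σ j * p^k = (p^k)⁻¹ * σ j` where `p = σ i * σ j`. -/
lemma simple_mul_pow (i j : B) (k : ℕ) :
    σ j * (σ i * σ j) ^ k = ((σ i * σ j) ^ k)⁻¹ * σ j := by
  induction k with
  | zero => simp
  | succ k ih =>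
    rw [pow_succ, ← mul_assoc, ih, mul_assoc, simple_mul_base, ← mul_assoc,
      ← mul_inv_rev, ← pow_succ, ← pow_succ']

/-- The quotient of consecutive alternating-word products. -/
lemma pi_alt_mul (i j : B) (d : ℕ) :
    (π (alternatingWord i j d))⁻¹ * π (alternatingWord i j (d + 1)) =
      ((σ i * σ j) ^ d)⁻¹ * σ j := by
  have h0 := cs.prod_alternatingWord_eq_mul_pow i j d
  have h1 := cs.prod_alternatingWord_eq_mul_pow i j (d + 1)
  rcases Nat.even_or_odd d with hd | hd
  · obtain ⟨c, hc⟩ := hd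
    have hde : Even d := ⟨c, hc⟩
    have hd1 : ¬ Even (d + 1) := by simp [Nat.even_add_one, hde]
    have hdiv : (d + 1) / 2 = d / 2 := by omega
    rw [if_pos hde] at h0
    rw [if_neg hd1, hdiv] at h1
    rw [h0, h1, one_mul, simple_mul_pow, ← mul_assoc, ← mul_inv_rev, ← pow_add,
      show d / 2 + d / 2 = d by omega]
  · obtain ⟨c, hc⟩ := hd
    have hd1 : Even (d + 1) := ⟨c + 1, by omega⟩
    have hdiv : (d + 1) / 2 = d / 2 + 1 := by omega
    rw [if_neg (by rw [Nat.not_even_iff_odd]; exact ⟨c, hc⟩)] at h0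
    rw [if_pos hd1, hdiv, one_mul] at h1
    rw [h0, h1, mul_inv_rev, inv_simple, mul_assoc, simple_mul_pow, ← mul_assoc,
      ← mul_inv_rev, ← pow_add, show d / 2 + 1 + d / 2 = d by omega]

lemma rightInvSeq_cons (a : B) (ω : List B) :
    cs.rightInvSeq (a :: ω) = ((π ω)⁻¹ * σ a * π ω) :: cs.rightInvSeq ω := rfl

lemma ris_alt (i j : B) (n : ℕ) :
    cs.rightInvSeq (alternatingWord i j n) =
      ((range n).reverse).map (fun d => ((σ i * σ j) ^ d)⁻¹ * σ j) := by
  induction n with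
  | zero => simp [alternatingWord]
  | succ n ih =>
    rw [alternatingWord_succ' i j n, rightInvSeq_cons]
    have hr : (range (n + 1)).reverse = n :: (range n).reverse := by
      rw [range_succ, reverse_append]; rfl
    rw [hr, map_cons, ← ih]
    congr 1
    have hx : σ (if Even n then j else i) * π (alternatingWord i j n) =
        π (alternatingWord i j (n + 1)) := by
      rw [alternatingWord_succ' i j n, wordProd_cons]
    rw [mul_assoc, hx]
    exact pi_alt_mul cs i j n

lemma count_ris_alt_even (i j : B) (t : W) :
    Even (count t (cs.rightInvSeq (alternatingWord i j (2 * M i j)))) := by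
  rw [ris_alt, map_reverse, count_reverse]
  rw [show 2 * M i j = M i j + M i j by omega, range_add, map_append, count_append]
  have he : (range (M i j)).map ((fun d => ((σ i * σ j) ^ d)⁻¹ * σ j) ∘ (M i j + ·)) =
      (range (M i j)).map (fun d => ((σ i * σ j) ^ d)⁻¹ * σ j) := by
    apply map_congr_left
    intro d _
    simp only [Function.comp]
    rw [pow_add, cs.simple_mul_simple_pow i j, one_mul]
  rw [map_map, he]
  exact ⟨count t ((range (M i j)).map (fun d => ((σ i * σ j) ^ d)⁻¹ * σ j)), rfl⟩

/-! ### The sign permutation representation -/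

/-- The permutation of `W × ZMod 2` associated to the simple reflection `σ i`. -/
noncomputable def mu (i : B) : Equiv.Perm (W × ZMod 2) where
  toFun te := (σ i * te.1 * σ i, if te.1 = σ i then te.2 + 1 else te.2)
  invFun te := (σ i * te.1 * σ i, if te.1 = σ i then te.2 + 1 else te.2)
  left_inv := by
    rintro ⟨t, e⟩
    by_cases h : t = σ i
    · subst h
      have h3 : σ i * σ i * σ i = σ i := by rw [cs.simple_mul_simple_self, one_mul]
      simp only [h3, eq_self_iff_true, if_true]
      exact Prod.ext rfl (by rw [add_assoc, show (1 + 1 : ZMod 2) = 0 from rfl, add_zero])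
    · have h2 : σ i * t * σ i ≠ σ i := by
        intro hc
        apply h
        have := congrArg (fun z => σ i * z * σ i) hc
        simpa [mul_assoc, cs.simple_mul_simple_self, cs.simple_mul_simple_cancel_left] using this
      simp only [h2, if_neg, h]
      simp [← mul_assoc, cs.simple_mul_simple_cancel_left, cs.simple_mul_simple_cancel_right,
        mul_assoc]
  right_inv := by
    rintro ⟨t, e⟩
    by_cases h : t = σ i
    · subst h
      have h3 : σ i * σ i * σ i = σ i := by rw [cs.simple_mul_simple_self, one_mul]
      simp only [h3, eq_self_iff_true, if_true]
      exact Prod.ext rfl (by rw [add_assoc, show (1 + 1 : ZMod 2) = 0 from rfl, add_zero])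
    · have h2 : σ i * t * σ i ≠ σ i := by
        intro hc
        apply h
        have := congrArg (fun z => σ i * z * σ i) hc
        simpa [mul_assoc, cs.simple_mul_simple_self, cs.simple_mul_simple_cancel_left] using this
      simp only [h2, if_neg, h]
      simp [← mul_assoc, cs.simple_mul_simple_cancel_left, cs.simple_mul_simple_cancel_right,
        mul_assoc]

lemma mu_apply (i : B) (t : W) (e : ZMod 2) :
    mu cs i (t, e) = (σ i * t * σ i, if t = σ i then e + 1 else e) := rfl

lemma mu_prod_apply (ω : List B) (t : W) (e : ZMod 2) :
    (ω.map (mu cs)).prod (t, e) =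
      (π ω * t * (π ω)⁻¹, e + (count t (cs.rightInvSeq ω) : ZMod 2)) := by
  induction ω with
  | nil => simp
  | cons a ω ih =>
    have hiff : (π ω * t * (π ω)⁻¹ = σ a) ↔ ((π ω)⁻¹ * σ a * π ω = t) := by
      constructor
      · intro h
        rw [← h]
        group
      · intro h
        rw [← h]
        group
    rw [map_cons, prod_cons, Equiv.Perm.mul_apply, ih, mu_apply, rightInvSeq_cons,
      Prod.mk.injEq]
    constructor
    · rw [wordProd_cons, mul_inv_rev, inv_simple]
      group
    · rw [count_cons]
      simp only [beq_iff_eq]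
      by_cases hc : (π ω)⁻¹ * σ a * π ω = t
      · rw [if_pos (hiff.mpr hc), if_pos hc]
        push_cast
        ring
      · rw [if_neg (fun hcc => hc (hiff.mp hcc)), if_neg hc]
        push_cast
        ring

lemma mu_liftable : M.IsLiftable (mu cs) := by
  intro i j
  have key : ∀ m : ℕ, (mu cs i * mu cs j) ^ m =
      ((alternatingWord i j (2 * m)).map (mu cs)).prod := by
    intro m
    induction m with
    | zero => simp [alternatingWord]
    | succ m ih =>
      have h2 : alternatingWord i j (2 * (m + 1)) = i :: j :: alternatingWord i j (2 * m) := by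
        rw [show 2 * (m + 1) = (2 * m + 1) + 1 by omega, alternatingWord_succ' i j,
          alternatingWord_succ' i j]
        simp [Nat.even_add_one, parity_simps]
      rw [h2, map_cons, map_cons, prod_cons, prod_cons, ← ih, pow_succ']
      rw [mul_assoc]
  have hπ : π (alternatingWord i j (2 * M i j)) = 1 := by
    rw [cs.prod_alternatingWord_eq_mul_pow, if_pos (by exact ⟨M i j, by omega⟩), one_mul,
      show 2 * M i j / 2 = M i j by omega, cs.simple_mul_simple_pow]
  rw [key (M i j)]
  ext ⟨t, e⟩
  · simp [mu_prod_apply, hπ]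
  · obtain ⟨c, hc⟩ := count_ris_alt_even cs i j t
    simp [mu_prod_apply, hc]
    rw [← two_mul, show ((2 : ZMod 2) = 0) from rfl, zero_mul]

/-- The lifted homomorphism recording inversion-count parities. -/
noncomputable def phi : W →* Equiv.Perm (W × ZMod 2) :=
  cs.lift ⟨mu cs, mu_liftable cs⟩

lemma phi_wordProd (ω : List B) : phi cs (π ω) = (ω.map (mu cs)).prod := by
  unfold wordProd
  rw [map_list_prod (phi cs), map_map]
  congr 1
  apply map_congr_left
  intro a _
  exact cs.lift_apply_simple (mu_liftable cs) a

/-- Parity of the number of times a reflection occurs in the right inversion sequence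
only depends on the product of the word. -/
lemma count_ris_parity {ω ω' : List B} (h : π ω = π ω') (t : W) :
    (count t (cs.rightInvSeq ω) : ZMod 2) = (count t (cs.rightInvSeq ω') : ZMod 2) := by
  have h1 := mu_prod_apply cs ω t 0
  have h2 := mu_prod_apply cs ω' t 0
  rw [← phi_wordProd, h] at h1
  rw [← phi_wordProd] at h2
  rw [h1] at h2
  have := congrArg Prod.snd h2
  simpa using this

/-! ### Strong exchange -/

lemma ris_append (α β : List B) :
    cs.rightInvSeq (α ++ β) =
      (cs.rightInvSeq α).map (fun r => (π β)⁻¹ * r * π β) ++ cs.rightInvSeq β := by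
  induction α with
  | nil => simp
  | cons a α ih =>
    rw [cons_append, rightInvSeq_cons, rightInvSeq_cons, ih, map_cons, cons_append]
    have hhead : (π (α ++ β))⁻¹ * σ a * π (α ++ β) =
        (π β)⁻¹ * ((π α)⁻¹ * σ a * π α) * π β := by
      simp [wordProd_append, mul_inv_rev, mul_assoc]
    rw [hhead]

lemma lis_eq_map_ris (ω : List B) :
    cs.leftInvSeq ω = (cs.rightInvSeq ω).map (fun r => π ω * r * (π ω)⁻¹) := by
  induction ω with
  | nil => simp
  | cons a ω ih =>
    show (σ a) :: (cs.leftInvSeq ω).map (MulAut.conj (σ a)) = _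
    rw [rightInvSeq_cons, map_cons, ih, map_map]
    refine congrArg₂ List.cons ?_ ?_
    · simp [wordProd_cons, mul_inv_rev, inv_simple, mul_assoc,
        cs.simple_mul_simple_cancel_left]
    · apply map_congr_left
      intro r _
      simp only [Function.comp, MulAut.conj_apply, wordProd_cons, mul_inv_rev, inv_simple]
      group

lemma count_conj_map (g h : W) (l : List W) (t : W) :
    count (g * t * h) (l.map (fun r => g * r * h)) = count t l := by
  have hinj : Function.Injective (fun r : W => g * r * h) := by
    intro a b hab
    simpa using hab
  exact count_map_of_injective l _ hinj t

/-- Strong exchange property. -/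
theorem strong_exchange {ζ : List B} (hζ : cs.IsReduced ζ) {t : W} (ht : cs.IsReflection t)
    (hlt : ℓ (π ζ * t) < ℓ (π ζ)) :
    ∃ j, j < ζ.length ∧ π ζ * t = π (ζ.eraseIdx j) := by
  obtain ⟨x, i, hxi⟩ := id ht
  -- a word for `t`
  obtain ⟨ρx, _, hρx⟩ := cs.exists_reduced_word' x
  set ρt : List B := ρx ++ i :: ρx.reverse with hρt
  have hπρt : π ρt = t := by
    rw [hρt, wordProd_append, wordProd_cons, wordProd_reverse, hxi, ← hρx, mul_assoc]
  -- a reduced word for `π ζ * t`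
  obtain ⟨ρu, hρured, hρu⟩ := cs.exists_reduced_word' (π ζ * t)
  set ω : List B := ρu ++ ρt with hω
  have hπω : π ω = π ζ := by
    rw [hω, wordProd_append, hπρt, ← hρu, mul_assoc, ht.mul_self, mul_one]
  -- count t in ris ω is odd
  have hcount_u : count t (cs.rightInvSeq ρu) = 0 := by
    rw [count_eq_zero]
    intro hmem
    have h2 := (cs.isRightInversion_of_mem_rightInvSeq hρured hmem).2
    rw [← hρu] at h2
    have h3 : π ζ * t * t = π ζ := by rw [mul_assoc, ht.mul_self, mul_one]
    rw [h3] at h2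
    omega
  have hconj_inj : ∀ g h : W, Function.Injective (fun r : W => g * r * h) := by
    intro g h r r' hrr'
    simpa using hrr'
  have hcount_ω : count t (cs.rightInvSeq ω) = 2 * count (σ i) (cs.rightInvSeq ρx) + 1 := by
    rw [hω, ris_append, count_append]
    have e1 : count t ((cs.rightInvSeq ρu).map (fun r => (π ρt)⁻¹ * r * π ρt)) = 0 := by
      have key : (π ρt)⁻¹ * t * (π ρt) = t := by
        rw [hπρt]
        group
      rw [← key, count_conj_map, hcount_u]
    rw [e1, zero_add]
    -- now ris ρt
    have e2 : cs.rightInvSeq ρt =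
        (cs.rightInvSeq ρx).map (fun r => (σ i * x⁻¹)⁻¹ * r * (σ i * x⁻¹)) ++
          (t :: cs.rightInvSeq ρx.reverse) := by
      rw [hρt, ris_append, rightInvSeq_cons]
      congr 2
      · rw [wordProd_cons, wordProd_reverse, hρx]
      · rw [wordProd_reverse, ← hρx, hxi]
        group
    rw [e2, count_append, count_cons, if_pos (beq_self_eq_true t)]
    have e3 : count t ((cs.rightInvSeq ρx).map
        (fun r => (σ i * x⁻¹)⁻¹ * r * (σ i * x⁻¹))) = count (σ i) (cs.rightInvSeq ρx) := by
      have key : (σ i * x⁻¹)⁻¹ * σ i * (σ i * x⁻¹) = t := by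
        rw [hxi]
        group
      rw [← key, count_conj_map]
    have e4 : count t (cs.rightInvSeq ρx.reverse) = count (σ i) (cs.rightInvSeq ρx) := by
      rw [cs.rightInvSeq_reverse, count_reverse, lis_eq_map_ris]
      have key : π ρx * σ i * (π ρx)⁻¹ = t := by
        rw [← hρx]
        exact hxi.symm
      rw [← key, count_conj_map]
    rw [e3, e4]
    omega
  have hparity := count_ris_parity cs hπω t
  rw [hcount_ω] at hparity
  have hmem : t ∈ cs.rightInvSeq ζ := by
    rw [← count_pos_iff]
    by_contra hcon
    have h0 : count t (cs.rightInvSeq ζ) = 0 := by omega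
    rw [h0, Nat.cast_zero, Nat.cast_add, Nat.cast_mul, Nat.cast_ofNat, Nat.cast_one,
      show ((2 : ZMod 2) = 0) from rfl, zero_mul, zero_add] at hparity
    exact one_ne_zero hparity
  obtain ⟨j, hj, hjt⟩ := List.mem_iff_getElem.mp hmem
  rw [cs.length_rightInvSeq] at hj
  refine ⟨j, hj, ?_⟩
  rw [← cs.wordProd_mul_getD_rightInvSeq ζ j]
  congr 1
  rw [← hjt, List.getD_eq_getElem _ 1 (by rw [cs.length_rightInvSeq]; exact hj)]

/-- Simple right exchange. -/
theorem simple_exchange {ζ : List B} (hζ : cs.IsReduced ζ) {i : B}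
    (hlt : ℓ (π ζ * σ i) < ℓ (π ζ)) :
    ∃ j, j < ζ.length ∧ π ζ * σ i = π (ζ.eraseIdx j) :=
  strong_exchange cs hζ (cs.isReflection_simple i) hlt

/-! ### The Bruhat order via chains -/

/-- One step in the Bruhat order. -/
def lt1 (u v : W) : Prop := ∃ t, cs.IsReflection t ∧ v = u * t ∧ ℓ u < ℓ v

/-- The Bruhat order, defined via chains of reflections. -/
def leC : W → W → Prop := Relation.ReflTransGen (lt1 cs)

lemma leC_refl (u : W) : leC cs u u := Relation.ReflTransGen.refl

lemma leC_trans {u v w : W} (h1 : leC cs u v) (h2 : leC cs v w) : leC cs u w :=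
  Relation.ReflTransGen.trans h1 h2

lemma leC_of_ascent {u t : W} (ht : cs.IsReflection t) (h : ℓ u < ℓ (u * t)) :
    leC cs u (u * t) :=
  Relation.ReflTransGen.single ⟨t, ht, rfl, h⟩

lemma leC_of_descent {u t : W} (ht : cs.IsReflection t) (h : ℓ (u * t) < ℓ u) :
    leC cs (u * t) u := by
  have key : (u * t) * t = u := by rw [mul_assoc, ht.mul_self, mul_one]
  have h2 := leC_of_ascent cs (u := u * t) ht (by rw [key]; exact h)
  rwa [key] at h2

lemma leC_length_le {u v : W} (h : leC cs u v) : ℓ u ≤ ℓ v := by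
  induction h with
  | refl => exact le_rfl
  | tail _ step ih =>
    obtain ⟨t, _, _, hl⟩ := step
    omega

lemma leC_eq_or_length_lt {u v : W} (h : leC cs u v) : u = v ∨ ℓ u < ℓ v := by
  induction h with
  | refl => exact Or.inl rfl
  | tail hub step ih =>
    obtain ⟨t, _, _, hl⟩ := step
    have := leC_length_le cs hub
    right
    omega

lemma isReduced_nil : cs.IsReduced ([] : List B) := by
  show ℓ (π []) = _
  simp

lemma leC_inv {u v : W} (h : leC cs u v) : leC cs u⁻¹ v⁻¹ := by
  induction h with
  | refl => exact leC_refl cs _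
  | @tail b c hub step ih =>
    obtain ⟨t, ht, rfl, hl⟩ := step
    refine Relation.ReflTransGen.tail ih ⟨b * t * b⁻¹, ht.conj b, ?_, ?_⟩
    · rw [mul_inv_rev, ht.inv]
      simp [mul_assoc]
    · rw [cs.length_inv, cs.length_inv]
      exact hl

/-- Deletion property: every word contains a reduced subword with the same product. -/
lemma del : ∀ n : ℕ, ∀ ω : List B, ω.length ≤ n →
    ∃ τ, τ <+ ω ∧ π τ = π ω ∧ cs.IsReduced τ := by
  intro n
  induction n with
  | zero =>
    intro ω hω
    rw [Nat.le_zero, List.length_eq_zero_iff] at hω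
    subst hω
    exact ⟨[], Sublist.refl _, rfl, isReduced_nil cs⟩
  | succ n IH =>
    intro ω hω
    by_cases hred : cs.IsReduced ω
    · exact ⟨ω, Sublist.refl _, rfl, hred⟩
    · classical
    -- find the first non-reduced prefix
      have hωne : ω ≠ [] := by
        rintro rfl
        exact hred (isReduced_nil cs)
      have hex : ∃ k, ¬ cs.IsReduced (ω.take (k + 1)) := by
        refine ⟨ω.length - 1, ?_⟩
        rwa [show ω.length - 1 + 1 = ω.length by
          have := List.length_pos_iff.mpr hωne
          omega, List.take_length]
      set k := Nat.find hex with hkdef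
      have hk : ¬ cs.IsReduced (ω.take (k + 1)) := Nat.find_spec hex
      have hklt : k < ω.length := by
        have h1 : k ≤ ω.length - 1 := Nat.find_min' hex (by
          rwa [show ω.length - 1 + 1 = ω.length by
            have := List.length_pos_iff.mpr hωne
            omega, List.take_length])
        have := List.length_pos_iff.mpr hωne
        omega
      have hkred : cs.IsReduced (ω.take k) := by
        rcases Nat.eq_zero_or_pos k with hk0 | hk0
        · rw [hk0]
          simpa using isReduced_nil cs
        · have := Nat.find_min hex (m := k - 1) (by omega)
          rw [not_not] at this
          rwa [show k - 1 + 1 = k by omega] at this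
      have hlen_take : (ω.take k).length = k := by
        rw [List.length_take]
        omega
      set c := ω[k] with hcdef
      have htakesucc : ω.take (k + 1) = ω.take k ++ [c] := by
        rw [List.take_succ, List.getElem?_eq_getElem hklt]
        rfl
      have hlds : ℓ (π (ω.take k) * σ c) < ℓ (π (ω.take k)) := by
        have h1 : ℓ (π (ω.take k)) = k := by rw [hkred, hlen_take]
        have h2 : ℓ (π (ω.take k) * σ c) ≠ k + 1 := by
          intro hcon
          apply hk
          rw [htakesucc]
          show ℓ (π (ω.take k ++ [c])) = _
          rw [wordProd_append, wordProd_singleton, hcon, List.length_append,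
            hlen_take, List.length_singleton]
        have h3 := cs.length_mul_simple (π (ω.take k)) c
        omega
      obtain ⟨m, hm, hmeq⟩ := simple_exchange cs hkred hlds
      have hm' : m < k := by rwa [hlen_take] at hm
      set τ₀ := (ω.take k).eraseIdx m ++ ω.drop (k + 1) with hτ₀
      have hπτ₀ : π τ₀ = π ω := by
        rw [hτ₀, wordProd_append, ← hmeq]
        conv_rhs => rw [← List.take_append_drop (k + 1) ω]
        rw [wordProd_append, htakesucc, wordProd_append, wordProd_singleton]
      have hsub₀ : τ₀ <+ ω := by
        conv_rhs => rw [← List.take_append_drop (k + 1) ω]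
        rw [htakesucc]
        exact Sublist.append
          ((List.eraseIdx_sublist _ m).trans (List.sublist_append_left _ _))
          (Sublist.refl _)
      have hlen₀ : τ₀.length ≤ n := by
        have h1 : ((ω.take k).eraseIdx m).length = k - 1 := by
          rw [List.length_eraseIdx, hlen_take, if_pos hm']
        have h2 : (ω.drop (k + 1)).length = ω.length - (k + 1) := by
          rw [List.length_drop]
        rw [hτ₀, List.length_append, h1, h2]
        omega
      obtain ⟨τ, hsub, hπ, hτred⟩ := IH τ₀ hlen₀
      exact ⟨τ, hsub.trans hsub₀, hπ.trans hπτ₀, hτred⟩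

/-- Chain order implies subword of *every* reduced word. -/
lemma subword_of_leC {u w : W} (h : leC cs u w) :
    ∀ ζ : List B, cs.IsReduced ζ → π ζ = w → ∃ τ, τ <+ ζ ∧ π τ = u := by
  induction h with
  | refl => exact fun ζ _ hζ => ⟨ζ, Sublist.refl _, hζ⟩
  | @tail b c hub step ih =>
    intro ζ hζred hζ
    obtain ⟨t, ht, rfl, hl⟩ := step
    have hbt : π ζ * t = b := by
      rw [hζ, mul_assoc, ht.mul_self, mul_one]
    have hlt : ℓ (π ζ * t) < ℓ (π ζ) := by
      rw [hbt, hζ]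
      exact hl
    obtain ⟨j, hj, hjeq⟩ := strong_exchange cs hζred ht hlt
    obtain ⟨τ₀, hsub₀, hπ₀, hred₀⟩ := del cs (ζ.eraseIdx j).length _ le_rfl
    obtain ⟨τ, hsub, hπ⟩ := ih τ₀ hred₀ (by rw [hπ₀, ← hjeq, hbt])
    exact ⟨τ, (hsub.trans hsub₀).trans (List.eraseIdx_sublist ζ j), hπ⟩

lemma sublist_concat_cases {σ' ρ : List B} {c : B} (h : σ' <+ ρ ++ [c]) :
    σ' <+ ρ ∨ ∃ σ₀, σ₀ <+ ρ ∧ σ' = σ₀ ++ [c] := by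
  have h2 : σ'.reverse <+ c :: ρ.reverse := by
    have := h.reverse
    rwa [List.reverse_append, List.reverse_singleton] at this
  rcases List.sublist_cons_iff.mp h2 with h3 | ⟨t, ht1, ht2⟩
  · left
    have := h3.reverse
    rwa [List.reverse_reverse, List.reverse_reverse] at this
  · right
    refine ⟨t.reverse, ?_, ?_⟩
    · have := ht2.reverse
      rwa [List.reverse_reverse] at this
    · have := congrArg List.reverse ht1
      rwa [List.reverse_reverse, List.reverse_cons] at this

/-- The `Z`-property, one half, relative to a subword-to-chain hypothesis
for short words. -/
lemma za {w : W} {i : B} (hw : ℓ (w * σ i) < ℓ w)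
    (HT2 : ∀ ζ : List B, ζ.length < ℓ w → cs.IsReduced ζ →
      ∀ τ, τ <+ ζ → leC cs (π τ) (π ζ))
    {u : W} (hu : leC cs u w) :
    (ℓ u < ℓ (u * σ i) → leC cs u (w * σ i)) ∧
    (ℓ (u * σ i) < ℓ u → leC cs (u * σ i) (w * σ i)) := by
  obtain ⟨ρ, hρred, hρ⟩ := cs.exists_reduced_word' (w * σ i)
  have hρlen : ρ.length = ℓ (w * σ i) := by rw [← hρred, ← hρ]
  have hwσ : ℓ (w * σ i) + 1 = ℓ w := by
    have := cs.length_mul_simple w i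
    omega
  have hπζ : π (ρ ++ [i]) = w := by
    rw [wordProd_append, wordProd_singleton, ← hρ, mul_assoc, cs.simple_mul_simple_self,
      mul_one]
  have hζred : cs.IsReduced (ρ ++ [i]) := by
    show ℓ (π (ρ ++ [i])) = _
    rw [hπζ, List.length_append, List.length_singleton, hρlen, hwσ]
  obtain ⟨τ, hsub, hπτ⟩ := subword_of_leC cs hu (ρ ++ [i]) hζred hπζ
  rcases sublist_concat_cases hsub with hcase | ⟨τ₀, hτ₀sub, rfl⟩
  · have hle : leC cs u (w * σ i) := by
      have := HT2 ρ (by omega) hρred τ hcase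
      rwa [hπτ, ← hρ] at this
    constructor
    · intro _
      exact hle
    · intro hdesc
      exact leC_trans cs (leC_of_descent cs (cs.isReflection_simple i) hdesc) hle
  · have hu₀ : leC cs (π τ₀) (w * σ i) := by
      have := HT2 ρ (by omega) hρred τ₀ hτ₀sub
      rwa [← hρ] at this
    have huτ : u = π τ₀ * σ i := by
      rw [← hπτ, wordProd_append, wordProd_singleton]
    have hcancel : u * σ i = π τ₀ := by
      rw [huτ, mul_assoc, cs.simple_mul_simple_self, mul_one]
    constructor
    · intro hasc
      have h1 : leC cs u (u * σ i) := leC_of_ascent cs (cs.isReflection_simple i) hasc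
      rw [hcancel] at h1
      exact leC_trans cs h1 hu₀
    · intro _
      rw [hcancel]
      exact hu₀

/-- Joint induction: subword implies chain, and the lifting property. -/
lemma T2lemC : ∀ n : ℕ,
    (∀ ζ : List B, ζ.length ≤ n → cs.IsReduced ζ → ∀ τ, τ <+ ζ → leC cs (π τ) (π ζ)) ∧
    (∀ v u : W, ∀ i : B, ℓ v + 1 ≤ n → leC cs u v → ℓ u < ℓ (u * σ i) →
      ℓ v < ℓ (v * σ i) → leC cs (u * σ i) (v * σ i)) := by
  intro n
  induction n using Nat.strong_induction_on with
  | _ n IH =>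
  have hC : ∀ v u : W, ∀ i : B, ℓ v + 1 ≤ n → leC cs u v → ℓ u < ℓ (u * σ i) →
      ℓ v < ℓ (v * σ i) → leC cs (u * σ i) (v * σ i) := by
    intro v u i hn hchain
    have hvfix : ℓ v < ℓ (v * σ i) → ℓ v < ℓ (v * σ i) := id
    induction hchain using Relation.ReflTransGen.head_induction_on with
    | refl =>
      intro _ _
      exact leC_refl cs _
    | @head a c step rest ih =>
      intro hua hv
      obtain ⟨t, ht, rfl, hlac⟩ := step
      have hastep : ℓ a < ℓ (a * σ i) → ℓ (a * σ i) = ℓ a + 1 := by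
        intro h
        have := cs.length_mul_simple a i
        omega
      by_cases hc : ℓ (a * t) < ℓ (a * t * σ i)
      · have h1 := ih hc hv
        have hstep : leC cs (a * σ i) (a * t * σ i) := by
          have hkey : (a * σ i) * (σ i * t * σ i) = a * t * σ i := by
            simp [mul_assoc, cs.simple_mul_simple_cancel_left]
          have hlen : ℓ (a * σ i) < ℓ ((a * σ i) * (σ i * t * σ i)) := by
            rw [hkey]
            have := hastep hua
            omega
          have := leC_of_ascent cs (u := a * σ i)
            (t := σ i * t * σ i) (by
              have := ht.conj (σ i)
              rwa [inv_simple] at this) hlen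
          rwa [hkey] at this
        exact leC_trans cs hstep h1
      · -- descent at a * t
        have hne : a * t ≠ v := by
          rintro rfl
          exact hc hv
        have hlcv : ℓ (a * t) < ℓ v := by
          rcases leC_eq_or_length_lt cs rest with h | h
          · exact absurd h hne
          · exact h
        have hdc : ℓ (a * t * σ i) < ℓ (a * t) := by
          have := cs.length_mul_simple (a * t) i
          omega
        have hac : leC cs a (a * t) := Relation.ReflTransGen.single ⟨t, ht, rfl, hlac⟩
        have hza := za cs hdc (fun ζ hζ hζred τ hτ =>
          (IH (ℓ (a * t)) (by omega)).1 ζ (by omega) hζred τ hτ) hac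
        have h1 : leC cs a (a * t * σ i) := hza.1 hua
        have h2 : leC cs (a * σ i) ((a * t * σ i) * σ i) := by
          refine (IH (n - 1) (by omega)).2 (a * t * σ i) a i (by omega) h1 hua ?_
          rw [mul_assoc (a * t) (σ i) (σ i), cs.simple_mul_simple_self, mul_one]
          exact hdc
        rw [mul_assoc (a * t) (σ i) (σ i), cs.simple_mul_simple_self, mul_one] at h2
        have h3 : leC cs (a * t) (v * σ i) :=
          leC_trans cs rest (leC_of_ascent cs (cs.isReflection_simple i) hv)
        exact leC_trans cs h2 h3
  refine ⟨?_, hC⟩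
  intro ζ hlen hred τ hsub
  rcases Nat.lt_or_ge ζ.length n with hlt | hge
  · exact (IH ζ.length hlt).1 ζ le_rfl hred τ hsub
  · have hn : ζ.length = n := by omega
    rcases List.eq_nil_or_concat' ζ with rfl | ⟨ρ, c, rfl⟩
    · have : τ = [] := List.sublist_nil.mp hsub
      rw [this]
      exact leC_refl cs _
    · have hρred : cs.IsReduced ρ := by
        have := hred.take (j := ρ.length)
        rwa [List.take_left] at this
      have hπζ : π (ρ ++ [c]) = π ρ * σ c := by
        rw [wordProd_append, wordProd_singleton]
      have hρlen : ℓ (π ρ) = ρ.length := hρred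
      have hζlen : ℓ (π (ρ ++ [c])) = ρ.length + 1 := by
        rw [hred]
        simp
      have hasc : ℓ (π ρ) < ℓ (π ρ * σ c) := by
        rw [hρlen, ← hπζ, hζlen]
        omega
      have hlenρ : ρ.length ≤ n - 1 := by
        have : (ρ ++ [c]).length = ρ.length + 1 := by simp
        omega
      have hn1 : n - 1 < n := by
        have : (ρ ++ [c]).length = ρ.length + 1 := by simp
        omega
      rcases sublist_concat_cases hsub with hcase | ⟨τ₀, hτ₀sub, rfl⟩
      · have h1 := (IH (n - 1) hn1).1 ρ hlenρ hρred τ hcase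
        have h2 : leC cs (π ρ) (π ρ * σ c) :=
          leC_of_ascent cs (cs.isReflection_simple c) hasc
        rw [hπζ]
        exact leC_trans cs h1 h2
      · have h1 := (IH (n - 1) hn1).1 ρ hlenρ hρred τ₀ hτ₀sub
        have hπτ : π (τ₀ ++ [c]) = π τ₀ * σ c := by
          rw [wordProd_append, wordProd_singleton]
        rw [hπζ, hπτ]
        by_cases hτasc : ℓ (π τ₀) < ℓ (π τ₀ * σ c)
        · exact hC (π ρ) (π τ₀) c (by omega) h1 hτasc hasc
        · have hdesc : ℓ (π τ₀ * σ c) < ℓ (π τ₀) := by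
            have := cs.length_mul_simple (π τ₀) c
            omega
          have h2 : leC cs (π τ₀ * σ c) (π τ₀) :=
            leC_of_descent cs (cs.isReflection_simple c) hdesc
          have h3 : leC cs (π ρ) (π ρ * σ c) :=
            leC_of_ascent cs (cs.isReflection_simple c) hasc
          exact leC_trans cs h2 (leC_trans cs h1 h3)

/-- Subword implies chain. -/
lemma T2 {ζ : List B} (hred : cs.IsReduced ζ) {τ : List B} (hsub : τ <+ ζ) :
    leC cs (π τ) (π ζ) :=
  (T2lemC cs ζ.length).1 ζ le_rfl hred τ hsub

/-- The lifting lemma: right multiplication by an ascent on both sides. -/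
lemma lemC {u v : W} (h : leC cs u v) (i : B) (hu : ℓ u < ℓ (u * σ i))
    (hv : ℓ v < ℓ (v * σ i)) : leC cs (u * σ i) (v * σ i) :=
  (T2lemC cs (ℓ v + 1)).2 v u i le_rfl h hu hv

/-- If `u ≤ z`, `z` descends at `i` and `u` ascends at `i`, then `u σᵢ ≤ z`. -/
lemma zd {u z : W} (h : leC cs u z) {i : B} (hz : ℓ (z * σ i) < ℓ z)
    (hu : ℓ u < ℓ (u * σ i)) : leC cs (u * σ i) z := by
  have h1 : leC cs u (z * σ i) :=
    (za cs hz (fun ζ hζ hζred τ hτ => T2 cs hζred hτ) h).1 hu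
  have h2 : ℓ (z * σ i) < ℓ ((z * σ i) * σ i) := by
    rw [mul_assoc, cs.simple_mul_simple_self, mul_one]
    exact hz
  have h3 := lemC cs h1 i hu h2
  rwa [mul_assoc, cs.simple_mul_simple_self, mul_one] at h3

/-- Left-handed lifting lemma. -/
lemma lemC_left {u v : W} (h : leC cs u v) (i : B) (hu : ℓ u < ℓ (σ i * u))
    (hv : ℓ v < ℓ (σ i * v)) : leC cs (σ i * u) (σ i * v) := by
  have h1 := leC_inv cs h
  have hu' : ℓ u⁻¹ < ℓ (u⁻¹ * σ i) := by
    rw [show u⁻¹ * σ i = (σ i * u)⁻¹ by rw [mul_inv_rev, inv_simple], cs.length_inv,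
      cs.length_inv]
    exact hu
  have hv' : ℓ v⁻¹ < ℓ (v⁻¹ * σ i) := by
    rw [show v⁻¹ * σ i = (σ i * v)⁻¹ by rw [mul_inv_rev, inv_simple], cs.length_inv,
      cs.length_inv]
    exact hv
  have h2 := lemC cs h1 i hu' hv'
  have h3 := leC_inv cs h2
  rwa [show (u⁻¹ * σ i)⁻¹ = σ i * u by rw [mul_inv_rev, inv_simple, inv_inv],
    show (v⁻¹ * σ i)⁻¹ = σ i * v by rw [mul_inv_rev, inv_simple, inv_inv]] at h3

/-- Left-handed `zd`. -/
lemma zd_left {u z : W} (h : leC cs u z) {i : B} (hz : ℓ (σ i * z) < ℓ z)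
    (hu : ℓ u < ℓ (σ i * u)) : leC cs (σ i * u) z := by
  have h1 := leC_inv cs h
  have hz' : ℓ (z⁻¹ * σ i) < ℓ z⁻¹ := by
    rw [show z⁻¹ * σ i = (σ i * z)⁻¹ by rw [mul_inv_rev, inv_simple], cs.length_inv,
      cs.length_inv]
    exact hz
  have hu' : ℓ u⁻¹ < ℓ (u⁻¹ * σ i) := by
    rw [show u⁻¹ * σ i = (σ i * u)⁻¹ by rw [mul_inv_rev, inv_simple], cs.length_inv,
      cs.length_inv]
    exact hu
  have h2 := zd cs h1 hz' hu'
  have h3 := leC_inv cs h2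
  rwa [show (u⁻¹ * σ i)⁻¹ = σ i * u by rw [mul_inv_rev, inv_simple, inv_inv], inv_inv] at h3

/-! ### The Demazure product -/

section Dem

variable {dem : W → W → W}
  (h1 : ∀ u : W, dem 1 u = u)
  (hs : ∀ (i : B) (u : W),
    dem (cs.simple i) u =
      if cs.length u < cs.length (cs.simple i * u) then cs.simple i * u else u)
  (hassoc : ∀ u v x : W, dem (dem u v) x = dem u (dem v x))

include h1 hs hassoc in
lemma dem_main : ∀ k : ℕ, ∀ v : W, ℓ v = k → ∀ w : W,
    ∃ y : W, leC cs y w ∧ ℓ (v * y) = ℓ v + ℓ y ∧ dem v w = v * y ∧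
      ∀ y' : W, leC cs y' w → ℓ (v * y') = ℓ v + ℓ y' → leC cs (v * y') (v * y) := by
  intro k
  induction k with
  | zero =>
    intro v hv w
    have hv1 : v = 1 := (cs.length_eq_zero_iff).mp hv
    subst hv1
    refine ⟨w, leC_refl cs w, by simp, by rw [h1 w, one_mul], ?_⟩
    intro y' hy' _
    simpa using hy'
  | succ k IH =>
    intro v hv w
    obtain ⟨ζ, hζred, hζ⟩ := cs.exists_reduced_word' v
    have hζlen : ζ.length = k + 1 := by rw [← hζred, ← hζ, hv]
    cases ζ with
    | nil => simp at hζlen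
    | cons a ζ' =>
    have hζ'red : cs.IsReduced ζ' := by
      have := hζred.drop (j := 1)
      simpa using this
    set v' := π ζ' with hv'def
    have hvv' : v = σ a * v' := by rw [hζ, wordProd_cons]
    have hζ'len : ζ'.length = k := by simpa using hζlen
    have hv'len : ℓ v' = k := by rw [hv'def]; rw [hζ'red, hζ'len]
    have hstep : ℓ (σ a * v') = ℓ v' + 1 := by rw [← hvv', hv, hv'len]
    have hdema : dem (σ a) v' = σ a * v' := by
      rw [hs a v', if_pos (by omega)]
    have hdem2 : dem v w = dem (σ a) (dem v' w) := by
      rw [hvv', ← hdema, hassoc]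
    obtain ⟨y, hyw, hadd, hdw, hmax⟩ := IH v' hv'len w
    rw [hdw, hs] at hdem2
    have hdich := cs.length_simple_mul (v' * y) a
    by_cases hasc : ℓ (v' * y) < ℓ (σ a * (v' * y))
    · rw [if_pos hasc] at hdem2
      refine ⟨y, hyw, ?_, ?_, ?_⟩
      · have e0 : ℓ (v * y) = ℓ (σ a * (v' * y)) := by rw [hvv', mul_assoc]
        omega
      · rw [hdem2, hvv', mul_assoc]
      · intro y' hy'w hy'add
        have e1 : ℓ (v' * y') ≤ ℓ v' + ℓ y' := cs.length_mul_le _ _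
        have e2 := cs.length_simple_mul (v' * y') a
        have e3 : ℓ (v * y') = ℓ (σ a * (v' * y')) := by rw [hvv', mul_assoc]
        have e4 : ℓ (v' * y') = ℓ v' + ℓ y' := by omega
        have e5 : ℓ (v' * y') < ℓ (σ a * (v' * y')) := by omega
        have h6 := hmax y' hy'w e4
        have h7 := lemC_left cs h6 a e5 hasc
        rw [hvv', mul_assoc, mul_assoc]
        exact h7
    · rw [if_neg hasc] at hdem2
      have hdesc : ℓ (σ a * (v' * y)) + 1 = ℓ (v' * y) := by omega
      obtain ⟨ρy, hρyred, hρy⟩ := cs.exists_reduced_word' y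
      have hρylen : ρy.length = ℓ y := by rw [← hρyred, ← hρy]
      set ω := ρy.reverse ++ ζ'.reverse with hω
      have hπω : π ω = (v' * y)⁻¹ := by
        rw [hω, wordProd_append, wordProd_reverse, wordProd_reverse, ← hρy, ← hv'def,
          mul_inv_rev]
      have hωlen : ω.length = ℓ y + k := by
        rw [hω, List.length_append, List.length_reverse, List.length_reverse, hρylen, hζ'len]
      have hωred : cs.IsReduced ω := by
        show ℓ (π ω) = _
        rw [hπω, cs.length_inv, hωlen]
        omega
      have hse : ℓ (π ω * σ a) < ℓ (π ω) := by
        rw [hπω, show (v' * y)⁻¹ * σ a = (σ a * (v' * y))⁻¹ by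
            simp [mul_inv_rev, inv_simple, mul_assoc],
          cs.length_inv, cs.length_inv]
        omega
      obtain ⟨j, hj, hjeq⟩ := simple_exchange cs hωred hse
      rw [hωlen] at hj
      have haux1 : ρy.reverse.length = ℓ y := by rw [List.length_reverse, hρylen]
      have haux2 : ζ'.reverse.length = k := by rw [List.length_reverse, hζ'len]
      by_cases hjy : j < ρy.reverse.length
      · rw [hω, List.eraseIdx_append_of_lt_length hjy] at hjeq
        set τ := (ρy.reverse.eraseIdx j).reverse with hτ
        set y₁ := π τ with hy₁
        have hπe : π (ρy.reverse.eraseIdx j) = y₁⁻¹ := by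
          rw [hy₁, hτ, wordProd_reverse, inv_inv]
        have hjeq' : (v' * y)⁻¹ * σ a = y₁⁻¹ * v'⁻¹ := by
          rw [← hπω, hjeq, wordProd_append, hπe, wordProd_reverse, ← hv'def]
        have hkey1 : σ a * (v' * y) = v' * y₁ := by
          have hh := congrArg (fun g : W => g⁻¹) hjeq'
          simp only [mul_inv_rev, inv_inv, inv_simple] at hh
          first
          | exact hh
          | (rw [mul_assoc] at hh; exact hh)
        have hkeyv : v * y₁ = v' * y := by
          rw [hvv', mul_assoc, ← hkey1, cs.simple_mul_simple_cancel_left]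
        have hτlen : τ.length + 1 = ℓ y := by
          rw [hτ, List.length_reverse, List.length_eraseIdx, if_pos hjy]
          omega
        have hy₁le : ℓ y₁ ≤ τ.length := by
          rw [hy₁]
          exact cs.length_wordProd_le τ
        have hmul1 : ℓ (v * y₁) ≤ ℓ v + ℓ y₁ := cs.length_mul_le _ _
        have hvy₁ : ℓ (v * y₁) = ℓ (v' * y) := by rw [hkeyv]
        have hadd₁ : ℓ (v * y₁) = ℓ v + ℓ y₁ := by omega
        have hsubρ : τ <+ ρy := by
          rw [hτ]
          have hh := (List.eraseIdx_sublist ρy.reverse j).reverse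
          rwa [List.reverse_reverse] at hh
        have hy₁y : leC cs y₁ y := by
          have hh := T2 cs hρyred hsubρ
          rwa [← hρy] at hh
        refine ⟨y₁, leC_trans cs hy₁y hyw, hadd₁, by rw [hdem2]; exact hkeyv.symm, ?_⟩
        intro y' hy'w hy'add
        have e1 : ℓ (v' * y') ≤ ℓ v' + ℓ y' := cs.length_mul_le _ _
        have e2 := cs.length_simple_mul (v' * y') a
        have e3 : ℓ (v * y') = ℓ (σ a * (v' * y')) := by rw [hvv', mul_assoc]
        have e4 : ℓ (v' * y') = ℓ v' + ℓ y' := by omega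
        have e5 : ℓ (v' * y') < ℓ (σ a * (v' * y')) := by omega
        have h6 := hmax y' hy'w e4
        have h7 := zd_left cs h6 (by omega) e5
        rw [hkeyv, hvv', mul_assoc]
        exact h7
      · push_neg at hjy
        rw [hω, List.eraseIdx_append_of_length_le hjy] at hjeq
        exfalso
        rw [hπω] at hjeq
        rw [wordProd_append, wordProd_reverse, ← hρy] at hjeq
        have h2 : y * ((v' * y)⁻¹ * σ a) = v'⁻¹ * σ a := by
          simp [mul_inv_rev, mul_assoc]
        have hjeq2 : v'⁻¹ * σ a = π (ζ'.reverse.eraseIdx (j - ρy.reverse.length)) := by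
          rw [← h2, hjeq]
          simp [mul_assoc]
        have hlen1 : ℓ (v'⁻¹ * σ a) = k + 1 := by
          rw [show v'⁻¹ * σ a = (σ a * v')⁻¹ by rw [mul_inv_rev, inv_simple], cs.length_inv,
            hstep, hv'len]
        have hjm : j - ρy.reverse.length < ζ'.reverse.length := by
          omega
        have hrl : (ζ'.reverse.eraseIdx (j - ρy.reverse.length)).length + 1 = k := by
          rw [List.length_eraseIdx, if_pos hjm]
          omega
        have hle : ℓ (π (ζ'.reverse.eraseIdx (j - ρy.reverse.length))) ≤
            (ζ'.reverse.eraseIdx (j - ρy.reverse.length)).length :=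
          cs.length_wordProd_le _
        rw [← hjeq2, hlen1] at hle
        omega

end Dem

end DemAux


/-- For all `v, w`: `v*w = max{vy : y ≤ w, ℓ(vy) = ℓ(v) + ℓ(y)}` (maximum w.r.t.
length, and achieved), and `v*w = vy` where `y` is the maximal-length element
with `y ≤ w` and `ℓ(vy) = ℓ(v) + ℓ(y)`. -/
theorem stmt4 {B W : Type*} [Group W] {M : CoxeterMatrix B} (cs : CoxeterSystem M W)
    (dem : W → W → W) (hdem : IsDemazureProduct cs dem) (v w : W) :
    ∃ y : W, bruhat cs y w ∧
      cs.length (v * y) = cs.length v + cs.length y ∧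
      dem v w = v * y ∧
      (∀ y' : W, bruhat cs y' w → cs.length (v * y') = cs.length v + cs.length y' →
        cs.length (v * y') ≤ cs.length (dem v w)) ∧
      (∀ y' : W, bruhat cs y' w → cs.length (v * y') = cs.length v + cs.length y' →
        cs.length y' ≤ cs.length y) := by
  obtain ⟨h1, hs, hassoc⟩ := hdem
  obtain ⟨y, hyw, hadd, hdw, hmax⟩ :=
    DemAux.dem_main cs h1 hs hassoc (cs.length v) v rfl w
  have hbruhat_to_leC : ∀ u' w' : W, bruhat cs u' w' → DemAux.leC cs u' w' := by
    rintro u' w' ⟨ω, hred, hπ, ω', hsub, hπ'⟩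
    have := DemAux.T2 cs hred hsub
    rwa [hπ, hπ'] at this
  refine ⟨y, ?_, hadd, hdw, ?_, ?_⟩
  · obtain ⟨ζ, hred, hπ⟩ := cs.exists_reduced_word' w
    obtain ⟨τ, hsub, hπτ⟩ := DemAux.subword_of_leC cs hyw ζ hred hπ.symm
    exact ⟨ζ, hred, hπ.symm, τ, hsub, hπτ⟩
  · intro y' hb hadd'
    have hle := hmax y' (hbruhat_to_leC y' w hb) hadd'
    have hlen := DemAux.leC_length_le cs hle
    rw [hdw]
    exact hlen
  · intro y' hb hadd'
    have hle := hmax y' (hbruhat_to_leC y' w hb) hadd'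
    have hlen := DemAux.leC_length_le cs hle
    rw [hadd'] at hlen
    rw [hadd] at hlen
    omega
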